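/- Let C_a and C_b be n×n Hermitian positive definite complex matrices, and let C̊ := C_b^{−1/2} C_a C_b^{−1/2} be the normalized covariance matrix. Then tr{(C_b⁻¹ − C_a⁻¹)(C_a − C_b)} = tr{(C̊ − I)^H C̊⁻¹ (C̊ − I)}, i.e. the Jeffreys divergence equals the weighted norm ‖C̊ − I‖²_{C̊}. (Paper's identity (18).) -/

import Mathlib

open Matrix
open scoped ComplexOrder

/-- The square root of a positive semidefinite matrix, as defined in Mathlib (Dec 2024). -/
noncomputable def Matrix.PosSemidef.sqrt {n : Type*} [Fintype n] [DecidableEq n] {𝕜 : Type*}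
    [RCLike 𝕜] {A : Matrix n n 𝕜} (hA : A.PosSemidef) : Matrix n n 𝕜 :=
  (hA.1.eigenvectorUnitary : Matrix n n 𝕜) *
    diagonal (fun i => ((√(hA.1.eigenvalues i) : ℝ) : 𝕜)) *
    (star hA.1.eigenvectorUnitary : Matrix n n 𝕜)

/-- Paper's identity (18): with the normalized covariance `C̊ := Cb^{−1/2} Ca Cb^{−1/2}`,
`tr{(Cb⁻¹ − Ca⁻¹)(Ca − Cb)} = tr{(C̊ − I)ᴴ C̊⁻¹ (C̊ − I)}`, i.e. the Jeffreys divergence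
equals the weighted norm `‖C̊ − I‖²_{C̊}`. -/
theorem jeffreys_eq_weighted_norm {n : ℕ} (Ca Cb : Matrix (Fin n) (Fin n) ℂ)
    (ha : Ca.PosDef) (hb : Cb.PosDef)
    (Cring : Matrix (Fin n) (Fin n) ℂ)
    (hCring : Cring = (hb.posSemidef.sqrt)⁻¹ * Ca * (hb.posSemidef.sqrt)⁻¹) :
    Matrix.trace ((Cb⁻¹ - Ca⁻¹) * (Ca - Cb)) =
      Matrix.trace ((Cring - 1)ᴴ * Cring⁻¹ * (Cring - 1)) := by
  set S := hb.posSemidef.sqrt with hSdef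
  have hSS : S * S = Cb := by
    have hst := hb.posSemidef.1.spectral_theorem
    rw [Unitary.conjStarAlgAut_apply] at hst
    have hUU := Unitary.coe_star_mul_self hb.posSemidef.1.eigenvectorUnitary
    rw [hSdef, Matrix.PosSemidef.sqrt]
    conv_rhs => rw [hst]
    calc _ = (hb.posSemidef.1.eigenvectorUnitary : Matrix (Fin n) (Fin n) ℂ) *
          diagonal (fun i => ((√(hb.posSemidef.1.eigenvalues i) : ℝ) : ℂ)) *
          ((star hb.posSemidef.1.eigenvectorUnitary : Matrix (Fin n) (Fin n) ℂ) *
            (hb.posSemidef.1.eigenvectorUnitary : Matrix (Fin n) (Fin n) ℂ)) *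
          diagonal (fun i => ((√(hb.posSemidef.1.eigenvalues i) : ℝ) : ℂ)) *
          (star hb.posSemidef.1.eigenvectorUnitary : Matrix (Fin n) (Fin n) ℂ) := by
            simp only [Matrix.mul_assoc]
            rfl
      _ = _ := by
            rw [hUU, Matrix.mul_one, Matrix.mul_assoc _ (diagonal _) (diagonal _),
              diagonal_mul_diagonal]
            congr 3
            funext i
            simp only [Function.comp_apply]
            rw [← Complex.ofReal_mul, Real.mul_self_sqrt (hb.posSemidef.eigenvalues_nonneg i)]
            rfl
  have hSH : Sᴴ = S := by
    rw [hSdef, Matrix.PosSemidef.sqrt, conjTranspose_mul, conjTranspose_mul, diagonal_conjTranspose]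
    simp only [Matrix.mul_assoc, ← star_eq_conjTranspose, star_star]
    congr 2
    congr 1; funext i; simp
  have hdetCb : IsUnit Cb.det := hb.det_pos.ne'.isUnit
  have hdetS : IsUnit S.det := by
    rw [← hSS, det_mul] at hdetCb
    exact isUnit_of_mul_isUnit_left hdetCb
  have hdetCa : IsUnit Ca.det := ha.det_pos.ne'.isUnit
  -- inverse of Cring
  have hCinv : Cring⁻¹ = S * Ca⁻¹ * S := by
    rw [hCring, Matrix.mul_inv_rev, Matrix.mul_inv_rev,
      Matrix.nonsing_inv_nonsing_inv _ hdetS, Matrix.mul_assoc]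
  -- Cring is invertible in the sense of one-sided identities
  have hCC : Cring * Cring⁻¹ = 1 := by
    rw [hCinv, hCring]
    calc S⁻¹ * Ca * S⁻¹ * (S * Ca⁻¹ * S)
        = S⁻¹ * (Ca * ((S⁻¹ * S) * Ca⁻¹)) * S := by noncomm_ring
      _ = 1 := by
          rw [Matrix.nonsing_inv_mul _ hdetS, Matrix.one_mul,
            Matrix.mul_nonsing_inv _ hdetCa, Matrix.mul_one,
            Matrix.nonsing_inv_mul _ hdetS]
  have hCC' : Cring⁻¹ * Cring = 1 := by
    rw [hCinv, hCring]
    calc S * Ca⁻¹ * S * (S⁻¹ * Ca * S⁻¹)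
        = S * (Ca⁻¹ * ((S * S⁻¹) * Ca)) * S⁻¹ := by noncomm_ring
      _ = 1 := by
          rw [Matrix.mul_nonsing_inv _ hdetS, Matrix.one_mul,
            Matrix.nonsing_inv_mul _ hdetCa, Matrix.mul_one,
            Matrix.mul_nonsing_inv _ hdetS]
  -- Hermitian
  have hSinvH : (S⁻¹)ᴴ = S⁻¹ := by rw [Matrix.conjTranspose_nonsing_inv, hSH]
  have hCH : (Cring - 1)ᴴ = Cring - 1 := by
    rw [conjTranspose_sub, conjTranspose_one, hCring,
      Matrix.conjTranspose_mul, Matrix.conjTranspose_mul, hSinvH, ha.1.eq]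
    noncomm_ring
  rw [hCH]
  -- expand the RHS matrix
  have hexp : (Cring - 1) * Cring⁻¹ * (Cring - 1) = Cring - 2 • 1 + Cring⁻¹ := by
    have : (Cring - 1) * Cring⁻¹ * (Cring - 1)
        = Cring * Cring⁻¹ * Cring - Cring * Cring⁻¹ - Cring⁻¹ * Cring + Cring⁻¹ := by
      noncomm_ring
    rw [this, hCC, hCC', Matrix.one_mul]
    noncomm_ring
  have hLexp : (Cb⁻¹ - Ca⁻¹) * (Ca - Cb) = Cb⁻¹ * Ca + Ca⁻¹ * Cb - 2 • 1 := by
    have : (Cb⁻¹ - Ca⁻¹) * (Ca - Cb)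
        = Cb⁻¹ * Ca - Cb⁻¹ * Cb - Ca⁻¹ * Ca + Ca⁻¹ * Cb := by noncomm_ring
    rw [this, Matrix.nonsing_inv_mul _ hdetCb, Matrix.nonsing_inv_mul _ hdetCa]
    noncomm_ring
  rw [hexp, hLexp]
  have htr1 : Matrix.trace Cring = Matrix.trace (Cb⁻¹ * Ca) := by
    rw [hCring, trace_mul_cycle, ← Matrix.mul_inv_rev, hSS]
  have htr2 : Matrix.trace Cring⁻¹ = Matrix.trace (Ca⁻¹ * Cb) := by
    rw [hCinv, trace_mul_cycle, hSS, trace_mul_comm]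
  simp only [trace_sub, trace_add, trace_smul, htr1, htr2]
  ring
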